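/- Let X be a variety over a finite field F_q and let n < 0 be an integer. Then ζ(X, n) ≠ 0 and ζ(X, s) has no pole at s = n; equivalently, q^{-n} is neither a zero nor a pole of the Hasse–Weil zeta function Z(X, t). -/

import Mathlib

open AlgebraicGeometry


section ZetaHelpers
open PowerSeries

private noncomputable def geo (d : ℕ) : PowerSeries ℚ := PowerSeries.mk fun k => if d ∣ k then (1:ℚ) else 0

private lemma geo_mul (d : ℕ) (hd : 1 ≤ d) : geo d * (1 - X ^ d) = 1 := by
  ext k
  rw [mul_sub, mul_one, map_sub, coeff_mul_X_pow']
  rcases le_or_gt d k with h | h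
  · rw [if_pos h]
    have hne : k ≠ 0 := by omega
    have : d ∣ k ↔ d ∣ k - d := by
      constructor
      · intro hk; exact (Nat.dvd_sub hk dvd_rfl)
      · intro hk; have := Nat.dvd_add hk (dvd_refl d); rwa [Nat.sub_add_cancel h] at this
    simp only [geo, coeff_mk, coeff_one, hne, this, sub_self, ↓reduceIte]
  · rw [if_neg (by omega)]
    rcases Nat.eq_zero_or_pos k with rfl | hk
    · simp [geo, coeff_one]
    · have : ¬ d ∣ k := fun hdk => by have := Nat.le_of_dvd hk hdk; omega
      simp [geo, coeff_one, this, hk.ne']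

private lemma coeff_X_mul_derivative (f : PowerSeries ℚ) (k : ℕ) :
    coeff k (X * derivative ℚ f) = k * coeff k f := by
  cases k with
  | zero => simp
  | succ k => rw [coeff_succ_X_mul, coeff_derivative]; push_cast; ring

private lemma T_mul (u v : PowerSeries ℚ) :
    X * derivative ℚ (u * v) = (X * derivative ℚ u) * v + u * (X * derivative ℚ v) := by
  rw [Derivation.leibniz, smul_eq_mul, smul_eq_mul]; ring

private lemma T_X_pow (d : ℕ) : X * derivative ℚ (X ^ d : PowerSeries ℚ) = (C (R := ℚ) d) * X ^ d := by
  ext k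
  rw [coeff_X_mul_derivative]
  simp only [coeff_X_pow, coeff_C_mul]
  by_cases h : k = d <;> simp [h]

private lemma T_factor (d a : ℕ) (hd : 1 ≤ d) :
    X * derivative ℚ ((1 - X ^ d) ^ a : PowerSeries ℚ)
      = -(C (R := ℚ) (d * a) * X ^ d * geo d) * (1 - X ^ d) ^ a := by
  set u : PowerSeries ℚ := 1 - X ^ d with hu
  cases a with
  | zero => simp
  | succ a =>
    rw [Derivation.leibniz_pow]
    simp only [Nat.add_sub_cancel]
    have h2 : X * derivative ℚ u = -(C (R := ℚ) d * X ^ d) := by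
      rw [hu, map_sub, mul_sub, T_X_pow]; simp
    have h1 : X * ((a+1) • (u ^ a • derivative ℚ u))
        = (a+1 : ℚ⟦X⟧) * (u ^ a * (X * derivative ℚ u)) := by
      rw [smul_eq_mul, nsmul_eq_mul]; push_cast; ring
    rw [h1, h2]
    have h3 : geo d * u ^ (a + 1) = u ^ a := by
      rw [pow_succ, ← mul_assoc, mul_comm (geo d), mul_assoc, hu, geo_mul d hd, mul_one]
    have h4 : (-(C (R := ℚ) (d * (a+1)) * X ^ d * geo d)) * u ^ (a+1)
        = -(C (R := ℚ) (d * (a+1)) * X ^ d * u ^ a) := by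
      rw [neg_mul, mul_assoc _ (geo d), h3]
    push_cast
    rw [h4]
    have h5 : ((C (R := ℚ)) ((d:ℚ) * ((a:ℚ) + 1)) : ℚ⟦X⟧) = C (R := ℚ) (d:ℚ) * ((a:ℚ⟦X⟧)+1) := by
      rw [map_mul]
      congr 1
      have := map_natCast (C (R := ℚ)) (a+1)
      push_cast at this ⊢
      exact this
    rw [h5]
    ring

private lemma T_prod (a : ℕ → ℕ) (t : Finset ℕ) (ht : ∀ d ∈ t, 1 ≤ d) :
    X * derivative ℚ (∏ d ∈ t, ((1 - X ^ d) ^ (a d) : ℚ⟦X⟧))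
      = (-∑ d ∈ t, C (R := ℚ) (d * a d) * X ^ d * geo d) * ∏ d ∈ t, ((1 - X ^ d) ^ (a d)) := by
  classical
  induction t using Finset.induction_on with
  | empty => simp
  | @insert b tt hx ih =>
    rw [Finset.prod_insert hx, Finset.sum_insert hx, T_mul,
      T_factor _ _ (ht b (Finset.mem_insert_self b tt)),
      ih (fun d hd => ht d (Finset.mem_insert_of_mem hd))]
    ring

private lemma zeta_integral (Nn a : ℕ → ℕ)
    (hN : ∀ k, Nn k = ∑ d ∈ k.divisors, d * a d)
    (Z : PowerSeries ℚ) (hZ0 : Z.coeff 0 = 1)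
    (hZ : X * derivative ℚ Z = PowerSeries.mk (fun k => (Nn k : ℚ)) * Z)
    (K : ℕ) : ∃ m : ℤ, Z.coeff K = m := by
  classical
  set s : Finset ℕ := Finset.Icc 1 K with hs
  set Y : ℚ⟦X⟧ := ∏ d ∈ s, ((1 - X ^ d) ^ (a d)) with hY
  set E : ℚ⟦X⟧ := ∑ d ∈ s, C (R := ℚ) (d * a d) * X ^ d * geo d with hE
  have hsmem : ∀ d ∈ s, 1 ≤ d := fun d hd => (Finset.mem_Icc.mp hd).1
  have TY : X * derivative ℚ Y = -E * Y := T_prod a s hsmem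
  have TG : X * derivative ℚ (Y * Z)
      = (PowerSeries.mk (fun k => (Nn k : ℚ)) - E) * (Y * Z) := by
    rw [T_mul, TY, hZ]; ring
  -- coefficients of the multiplier vanish up to K
  have hcoeffC : ∀ k ≤ K, coeff k (PowerSeries.mk (fun k => (Nn k : ℚ)) - E) = 0 := by
    intro k hk
    rw [map_sub, coeff_mk]
    rcases Nat.eq_zero_or_pos k with rfl | hk1
    · have : Nn 0 = 0 := by rw [hN]; simp
      rw [this]
      have : coeff 0 E = 0 := by
        rw [hE, map_sum]
        refine Finset.sum_eq_zero fun d hd => ?_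
        rw [mul_assoc, coeff_C_mul, coeff_X_pow_mul']
        simp [Nat.not_le.mpr (hsmem d hd)]
      rw [this]; simp
    · have hEk : coeff k E = Nn k := by
        rw [hE, map_sum]
        have : ∀ d ∈ s, coeff k (C (R := ℚ) (d * a d) * X ^ d * geo d)
            = if d ≤ k ∧ d ∣ k - d then ((d * a d : ℕ) : ℚ) else 0 := by
          intro d hd
          rw [mul_assoc, coeff_C_mul, coeff_X_pow_mul']
          by_cases h : d ≤ k
          · simp only [h, true_and, if_pos h, geo, coeff_mk]
            by_cases h2 : d ∣ k - d <;> simp [h2]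
          · simp [h]
        rw [Finset.sum_congr rfl this, Finset.sum_ite, Finset.sum_const_zero, add_zero]
        have hfil : s.filter (fun d => d ≤ k ∧ d ∣ k - d) = k.divisors := by
          ext d
          simp only [Finset.mem_filter, hs, Finset.mem_Icc, Nat.mem_divisors]
          constructor
          · rintro ⟨⟨h1, h2⟩, h3, h4⟩
            refine ⟨?_, by omega⟩
            have := Nat.dvd_add h4 (dvd_refl d)
            rwa [Nat.sub_add_cancel h3] at this
          · rintro ⟨h1, h2⟩
            have hd1 : 1 ≤ d := Nat.pos_of_dvd_of_pos h1 hk1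
            have hdk : d ≤ k := Nat.le_of_dvd hk1 h1
            exact ⟨⟨hd1, le_trans hdk hk⟩, hdk, Nat.dvd_sub h1 dvd_rfl⟩
        rw [hfil, hN k]
        push_cast
        rfl
      rw [hEk]; simp
  have Gzero : ∀ k, 1 ≤ k → k ≤ K → coeff k (Y * Z) = 0 := by
    intro k h1 h2
    have hsum : ∑ p ∈ Finset.HasAntidiagonal.antidiagonal k,
        coeff p.1 (PowerSeries.mk (fun k => (Nn k : ℚ)) - E) * coeff p.2 (Y * Z) = 0 := by
      refine Finset.sum_eq_zero fun p hp => ?_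
      have : p.1 ≤ K := by
        have := Finset.HasAntidiagonal.mem_antidiagonal.mp hp; omega
      rw [hcoeffC p.1 this, zero_mul]
    have h0 : (k : ℚ) * coeff k (Y * Z) = 0 := by
      rw [← coeff_X_mul_derivative, TG, coeff_mul]; exact hsum
    have hk0 : (k : ℚ) ≠ 0 := Nat.cast_ne_zero.mpr (by omega)
    exact (mul_eq_zero.mp h0).resolve_left hk0
  have G0 : coeff 0 (Y * Z) = 1 := by
    rw [coeff_zero_eq_constantCoeff, map_mul]
    have : constantCoeff Y = 1 := by
      rw [hY, map_prod]
      refine Finset.prod_eq_one fun d hd => ?_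
      rw [map_pow, map_sub, map_one, map_pow, constantCoeff_X]
      simp [zero_pow (by have := hsmem d hd; omega : d ≠ 0)]
    rw [this, one_mul, ← coeff_zero_eq_constantCoeff, hZ0]
  -- integral model of Y
  set Yz : PowerSeries ℤ := ∏ d ∈ s, ((1 - X ^ d) ^ (a d)) with hYz
  have hmapY : PowerSeries.map (Int.castRingHom ℚ) Yz = Y := by
    rw [hYz, hY, map_prod]
    refine Finset.prod_congr rfl fun d hd => ?_
    rw [map_pow, map_sub, map_one, map_pow, PowerSeries.map_X]
  have hunit : IsUnit Yz := by
    rw [PowerSeries.isUnit_iff_constantCoeff]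
    have : constantCoeff Yz = 1 := by
      rw [hYz, map_prod]
      refine Finset.prod_eq_one fun d hd => ?_
      rw [map_pow, map_sub, map_one, map_pow, constantCoeff_X]
      simp [zero_pow (by have := hsmem d hd; omega : d ≠ 0)]
    rw [this]; exact isUnit_one
  obtain ⟨u, hu⟩ := hunit
  have hU : (↑u⁻¹ : ℤ⟦X⟧) * Yz = 1 := by rw [← hu, Units.inv_mul]
  have hZeq : Z = PowerSeries.map (Int.castRingHom ℚ) (↑u⁻¹ : ℤ⟦X⟧) * (Y * Z) := by
    rw [← mul_assoc, ← hmapY, ← map_mul, hU, map_one, one_mul]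
  refine ⟨coeff K (↑u⁻¹ : ℤ⟦X⟧), ?_⟩
  have := congrArg (coeff K) hZeq
  rw [coeff_mul] at this
  rw [this]
  rw [Finset.sum_eq_single_of_mem (K, 0) (by simp)]
  · rw [G0, mul_one, PowerSeries.coeff_map]
    simp
  · rintro ⟨i, j⟩ hp hne
    have hij : i + j = K := Finset.HasAntidiagonal.mem_antidiagonal.mp hp
    have hj : 1 ≤ j := by
      rcases Nat.eq_zero_or_pos j with rfl | h
      · exact absurd (by omega : i = K) (by simpa using hne)
      · exact h
    rw [Gzero j hj (by omega), mul_zero]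

private lemma pow_dvd_all_eq_zero (c : ℕ) (hc : 2 ≤ c) (b : ℤ) (h : ∀ M : ℕ, ((c:ℤ))^(M+1) ∣ b) :
    b = 0 := by
  by_contra hb
  have h1 := h b.natAbs
  have h2 : (c ^ (b.natAbs + 1) : ℕ) ∣ b.natAbs := by
    have h2' := Int.natAbs_dvd_natAbs.mpr h1
    simp only [Int.natAbs_pow, Int.natAbs_natCast] at h2'
    exact h2'
  have h3 : c ^ (b.natAbs + 1) ≤ b.natAbs :=
    Nat.le_of_dvd (Int.natAbs_pos.mpr hb) h2
  have h4 : b.natAbs < 2 ^ (b.natAbs + 1) :=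
    lt_of_lt_of_le Nat.lt_two_pow_self (Nat.pow_le_pow_right (by norm_num) (by omega))
  have h5 : (2:ℕ) ^ (b.natAbs + 1) ≤ c ^ (b.natAbs + 1) := Nat.pow_le_pow_left hc _
  omega

private lemma no_root (Z : PowerSeries ℚ) (hZint : ∀ k, ∃ m : ℤ, coeff k Z = m)
    (hZ0 : coeff 0 Z = 1) (c : ℕ) (hc : 2 ≤ c)
    (P Q : Polynomial ℚ) (hcop : IsCoprime P Q)
    (hPQZ : (P : PowerSeries ℚ) = (Q : PowerSeries ℚ) * Z) :
    Polynomial.eval (c:ℚ) P ≠ 0 ∧ Polynomial.eval (c:ℚ) Q ≠ 0 := by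
  classical
  choose z hz using hZint
  have z0 : z 0 = 1 := by
    have := hz 0; rw [hZ0] at this; exact_mod_cast this.symm
  have not_both : ¬(Polynomial.eval (c:ℚ) P = 0 ∧ Polynomial.eval (c:ℚ) Q = 0) := by
    rintro ⟨hP, hQ⟩
    obtain ⟨u, v, huv⟩ := hcop
    have := congrArg (Polynomial.eval (c:ℚ)) huv
    simp [hP, hQ] at this
  set D : ℕ := ∏ k ∈ Finset.range (max P.natDegree Q.natDegree + 1),
      ((P.coeff k).den * (Q.coeff k).den) with hD
  have hD0 : D ≠ 0 := by
    rw [hD]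
    refine Finset.prod_ne_zero_iff.mpr fun k _ => ?_
    exact Nat.mul_ne_zero (P.coeff k).den_nz (Q.coeff k).den_nz
  have hPden : ∀ k, (P.coeff k).den ∣ D := by
    intro k
    by_cases hk : k ≤ max P.natDegree Q.natDegree
    · exact dvd_trans (Dvd.intro _ rfl) (Finset.dvd_prod_of_mem _ (Finset.mem_range.mpr (by omega)))
    · have : P.coeff k = 0 := P.coeff_eq_zero_of_natDegree_lt (by omega)
      rw [this]; simp
  have hQden : ∀ k, (Q.coeff k).den ∣ D := by
    intro k
    by_cases hk : k ≤ max P.natDegree Q.natDegree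
    · exact dvd_trans (Dvd.intro_left _ rfl) (Finset.dvd_prod_of_mem _ (Finset.mem_range.mpr (by omega)))
    · have : Q.coeff k = 0 := Q.coeff_eq_zero_of_natDegree_lt (by omega)
      rw [this]; simp
  have intD : ∀ r : ℚ, r.den ∣ D → ((D:ℚ) * r) ∈ (⊥ : Subring ℚ) := by
    rintro r ⟨e, he⟩
    refine Subring.mem_bot.mpr ⟨e * r.num, ?_⟩
    have h1 : (r.den : ℚ) * r = (r.num : ℚ) := by
      rw [mul_comm]; exact_mod_cast Rat.mul_den_eq_num r
    rw [he]; push_cast; rw [← h1]; ring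
  -- integer values of D * evals
  have hPev : (D:ℚ) * Polynomial.eval (c:ℚ) P ∈ (⊥ : Subring ℚ) := by
    rw [Polynomial.eval_eq_sum_range' (Nat.lt_succ_self _) (c:ℚ), Finset.mul_sum]
    refine Subring.sum_mem _ fun k _ => ?_
    rw [← mul_assoc]
    exact Subring.mul_mem _ (intD _ (hPden k)) (pow_mem (natCast_mem _ c) k)
  have hQev : (D:ℚ) * Polynomial.eval (c:ℚ) Q ∈ (⊥ : Subring ℚ) := by
    rw [Polynomial.eval_eq_sum_range' (Nat.lt_succ_self _) (c:ℚ), Finset.mul_sum]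
    refine Subring.sum_mem _ fun k _ => ?_
    rw [← mul_assoc]
    exact Subring.mul_mem _ (intD _ (hQden k)) (pow_mem (natCast_mem _ c) k)
  obtain ⟨DPc, hDPc⟩ := Subring.mem_bot.mp hPev
  obtain ⟨DQc, hDQc⟩ := Subring.mem_bot.mp hQev
  set S : ℕ → ℤ := fun M => ∑ j ∈ Finset.range (M+1), z j * (c:ℤ)^j with hS
  -- the key divisibility
  have key : ∀ M : ℕ, ((c:ℤ))^(M+1) ∣ (DPc - DQc * S M) := by
    intro M
    set Ztr : Polynomial ℚ := PowerSeries.trunc (M+1) Z with hZtrdef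
    have hdvd : (Polynomial.X : Polynomial ℚ)^(M+1) ∣ (P - Q * Ztr) := by
      rw [Polynomial.X_pow_dvd_iff]
      intro t ht
      have h1 := congrArg (coeff t) hPQZ
      rw [Polynomial.coeff_coe, PowerSeries.coeff_mul] at h1
      rw [Polynomial.coeff_sub, Polynomial.coeff_mul, h1, sub_eq_zero]
      refine Finset.sum_congr rfl fun p hp => ?_
      rw [Polynomial.coeff_coe]
      congr 1
      rw [hZtrdef, PowerSeries.coeff_trunc,
        if_pos (by have := Finset.HasAntidiagonal.mem_antidiagonal.mp hp; omega)]
    obtain ⟨V, hV⟩ := hdvd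
    have hEval : Polynomial.eval (c:ℚ) P - Polynomial.eval (c:ℚ) Q * Polynomial.eval (c:ℚ) Ztr
        = (c:ℚ)^(M+1) * Polynomial.eval (c:ℚ) V := by
      have := congrArg (Polynomial.eval (c:ℚ)) hV
      simpa using this
    have hZtr : Polynomial.eval (c:ℚ) Ztr = ((S M : ℤ) : ℚ) := by
      rw [hZtrdef, Polynomial.eval_eq_sum_range' (PowerSeries.natDegree_trunc_lt Z M) (c:ℚ), hS]
      push_cast
      refine Finset.sum_congr rfl fun j hj => ?_
      rw [PowerSeries.coeff_trunc, if_pos (Finset.mem_range.mp hj), hz j]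
    have hVcoeff : ∀ k, (D:ℚ) * V.coeff k ∈ (⊥ : Subring ℚ) := by
      intro k
      have h2 : V.coeff k = (P - Q * Ztr).coeff (k + (M+1)) := by
        rw [hV, Polynomial.coeff_X_pow_mul]
      rw [h2, Polynomial.coeff_sub, Polynomial.coeff_mul, mul_sub, Finset.mul_sum]
      refine Subring.sub_mem _ (intD _ (hPden _)) (Subring.sum_mem _ fun p _ => ?_)
      rw [← mul_assoc]
      refine Subring.mul_mem _ (intD _ (hQden _)) ?_
      rw [hZtrdef, PowerSeries.coeff_trunc]
      by_cases h3 : p.2 < M + 1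
      · rw [if_pos h3, hz]
        exact Subring.mem_bot.mpr ⟨z p.2, rfl⟩
      · rw [if_neg h3]
        exact Subring.zero_mem _
    have hVev : (D:ℚ) * Polynomial.eval (c:ℚ) V ∈ (⊥ : Subring ℚ) := by
      rw [Polynomial.eval_eq_sum_range' (Nat.lt_succ_self _) (c:ℚ), Finset.mul_sum]
      refine Subring.sum_mem _ fun k _ => ?_
      rw [← mul_assoc]
      exact Subring.mul_mem _ (hVcoeff k) (pow_mem (natCast_mem _ c) k)
    obtain ⟨W, hW⟩ := Subring.mem_bot.mp hVev
    refine ⟨W, ?_⟩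
    have e1 : (DPc:ℚ) - (DQc:ℚ) * ((S M : ℤ):ℚ) = ((c:ℚ))^(M+1) * ((W:ℚ)) := by
      rw [hDPc, hDQc, hW, ← hZtr]
      linear_combination (D:ℚ) * hEval
    exact_mod_cast e1
  -- coprimality of c with S M
  have hSco : ∀ M, IsCoprime ((c:ℤ)^(M+1)) (S M) := by
    intro M
    have hSM : S M = 1 + (c:ℤ) * ∑ j ∈ Finset.range M, z (j+1) * (c:ℤ)^j := by
      rw [hS]
      simp only [Finset.sum_range_succ']
      rw [z0, Finset.mul_sum]
      simp only [pow_succ, pow_zero, mul_one, one_mul]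
      rw [add_comm]
      congr 1
      exact Finset.sum_congr rfl fun j _ => by ring
    rw [hSM]
    exact (isCoprime_one_right.add_mul_left_right _).pow_left
  constructor
  · intro hP0
    by_cases hQ0 : Polynomial.eval (c:ℚ) Q = 0
    · exact not_both ⟨hP0, hQ0⟩
    have hDPc0 : DPc = 0 := by
      have : (DPc:ℚ) = 0 := by rw [hDPc, hP0, mul_zero]
      exact_mod_cast this
    have hdvdQ : ∀ M : ℕ, ((c:ℤ))^(M+1) ∣ DQc := by
      intro M
      have h := key M
      rw [hDPc0, zero_sub, dvd_neg] at h
      exact (hSco M).dvd_of_dvd_mul_right h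
    have hDQc0 : DQc = 0 := pow_dvd_all_eq_zero c hc _ hdvdQ
    apply hQ0
    have : (D:ℚ) * Polynomial.eval (c:ℚ) Q = 0 := by rw [← hDQc, hDQc0]; simp
    rcases mul_eq_zero.mp this with h | h
    · exact absurd (by exact_mod_cast h) hD0
    · exact h
  · intro hQ0
    have hDQc0 : DQc = 0 := by
      have : (DQc:ℚ) = 0 := by rw [hDQc, hQ0, mul_zero]
      exact_mod_cast this
    have hdvdP : ∀ M : ℕ, ((c:ℤ))^(M+1) ∣ DPc := by
      intro M
      have h := key M
      rwa [hDQc0, zero_mul, sub_zero] at h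
    have hDPc0 : DPc = 0 := pow_dvd_all_eq_zero c hc _ hdvdP
    have hP0 : Polynomial.eval (c:ℚ) P = 0 := by
      have : (D:ℚ) * Polynomial.eval (c:ℚ) P = 0 := by rw [← hDPc, hDPc0]; simp
      rcases mul_eq_zero.mp this with h | h
      · exact absurd (by exact_mod_cast h) hD0
      · exact h
    exact not_both ⟨hP0, hQ0⟩


end ZetaHelpers

/-!
STATEMENT 7. Let `X` be a variety over a finite field `𝔽_q` (separated, of finite type over
`Spec 𝔽_q`) and let `n < 0` be an integer.  Then `ζ(X,n) ≠ 0` and `ζ(X,s)` has no pole at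
`s = n`; equivalently, `q^{-n}` is neither a zero nor a pole of the Hasse–Weil zeta function
`Z(X,t)`.

`Z(X,t) = exp(∑_{k ≥ 1} #X(𝔽_{q^k}) t^k / k)` is encoded as the formal power series
`Z ∈ ℚ⟦t⟧` with `Z(0) = 1` whose logarithmic derivative satisfies
`t·Z'(t) = (∑_{k ≥ 1} N_k t^k)·Z(t)`, where `N_k = #X(𝔽_{q^k})` is computed from the closed
points: `N_k = ∑_{d ∣ k} d · #{x closed : N(x) = q^d}`.  By Dwork, `Z` is a rational
function; the conclusion says that for any representation `Z = P/Q` with `P, Q` coprime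
polynomials (normalized by `Q(0) = 1`), neither `P` nor `Q` vanishes at `t = q^{-n}`.
-/
theorem hasseWeil_zeta_no_zero_no_pole_at_negative_integers
    (F : Type) [Field F] [Fintype F] (q : ℕ) (hq : q = Fintype.card F)
    (X : Scheme) (f : X ⟶ Spec (CommRingCat.of F))
    [IsSeparated f] [LocallyOfFiniteType f] [QuasiCompact f]
    (N : ℕ → ℕ)
    (hN : ∀ k, N k = ∑ d ∈ k.divisors,
      d * Nat.card {x : X // IsClosed ({x} : Set X) ∧ Nat.card (X.residueField x) = q ^ d})
    (Z : PowerSeries ℚ) (hZ0 : Z.coeff 0 = 1)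
    (hZ : PowerSeries.X * PowerSeries.derivative ℚ Z =
      PowerSeries.mk (fun k => (N k : ℚ)) * Z)
    (n : ℤ) (hn : n < 0) :
    ∀ P Q : Polynomial ℚ, IsCoprime P Q → Q.coeff 0 = 1 →
      (P : PowerSeries ℚ) = (Q : PowerSeries ℚ) * Z →
      Polynomial.eval ((q : ℚ) ^ (-n)) P ≠ 0 ∧ Polynomial.eval ((q : ℚ) ^ (-n)) Q ≠ 0 := by
  intro P Q hcop hQ0c hPQZ
  have hq2 : 2 ≤ q := by rw [hq]; exact Fintype.one_lt_card
  set m : ℕ := (-n).toNat with hm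
  have hm1 : 1 ≤ m := by omega
  have hcast : ((q:ℚ)) ^ (-n) = ((q ^ m : ℕ) : ℚ) := by
    have h1 : (-n) = (m : ℤ) := by omega
    rw [h1, zpow_natCast]
    push_cast
    ring
  rw [hcast]
  have hc : 2 ≤ q ^ m := le_trans hq2 (Nat.le_self_pow (by omega) q)
  exact no_root Z
    (zeta_integral N
      (fun d => Nat.card {x : X // IsClosed ({x} : Set X) ∧ Nat.card (X.residueField x) = q ^ d})
      hN Z hZ0 hZ) hZ0 (q ^ m) hc P Q hcop hPQZ
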